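/- Strong duality for the Sinkhorn problem (Proposition 3.5): if all p_i > 0 and all p̃_j > 0, then the supremum of d(α, α̃) over strictly positive vectors α ∈ ℝ^n and α̃ ∈ ℝ^ñ equals the minimum of F_λ(π) over couplings π of (p, p̃) with strictly positive entries, and both are attained. -/

import Mathlib

open Finset

/-- Entropy of a matrix (convention `0 * log 0 = 0` holds since `Real.log 0 = 0`). -/
noncomputable def entM {n m : ℕ} (π : Fin n → Fin m → ℝ) : ℝ :=
  -∑ i, ∑ j, π i j * Real.log (π i j)

/-- A coupling of `(p, pt)`: nonnegative entries, row sums `p`, column sums `pt`. -/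
def IsCoupling {n m : ℕ} (p : Fin n → ℝ) (pt : Fin m → ℝ) (π : Fin n → Fin m → ℝ) : Prop :=
  (∀ i j, 0 ≤ π i j) ∧ (∀ i, ∑ j, π i j = p i) ∧ (∀ j, ∑ i, π i j = pt j)

/-- The Sinkhorn (entropy-regularized) objective. -/
noncomputable def Fobj {n m : ℕ} (lam : ℝ) (c π : Fin n → Fin m → ℝ) : ℝ :=
  (∑ i, ∑ j, π i j * c i j) - (1 / lam) * entM π

/-- The dual function of the Sinkhorn problem. -/
noncomputable def dual {n m : ℕ} (lam : ℝ) (c : Fin n → Fin m → ℝ)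
    (p : Fin n → ℝ) (pt : Fin m → ℝ) (α : Fin n → ℝ) (αt : Fin m → ℝ) : ℝ :=
  1 / lam + (1 / lam) * ∑ i, p i * Real.log (α i)
    + (1 / lam) * ∑ j, pt j * Real.log (αt j)
    - (1 / lam) * ∑ i, ∑ j, α i * Real.exp (-lam * c i j) * αt j

lemma gibbs {a b : ℝ} (ha : 0 ≤ a) (hb : 0 < b) :
    a - b ≤ a * (Real.log a - Real.log b) := by
  rcases eq_or_lt_of_le ha with h | h
  · simp [← h, hb.le]
  · have h1 : Real.log (b / a) ≤ b / a - 1 := Real.log_le_sub_one_of_pos (by positivity)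
    rw [Real.log_div hb.ne' h.ne'] at h1
    have := mul_le_mul_of_nonneg_left h1 h.le
    have h2 : a * (b / a - 1) = b - a := by field_simp
    nlinarith [this]

lemma sinkhorn_key {n m : ℕ} (p : Fin n → ℝ) (pt : Fin m → ℝ) (π : Fin n → Fin m → ℝ)
    (hrow : ∀ i, ∑ j, π i j = p i) (hcol : ∀ j, ∑ i, π i j = pt j)
    (hp1 : ∑ i, p i = 1)
    (c : Fin n → Fin m → ℝ) (lam : ℝ) (hlam : lam ≠ 0)
    (α : Fin n → ℝ) (αt : Fin m → ℝ) (hα : ∀ i, 0 < α i) (hαt : ∀ j, 0 < αt j) :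
    lam * Fobj lam c π - lam * dual lam c p pt α αt
      = ∑ i, ∑ j, (π i j * (Real.log (π i j) - Real.log (α i * Real.exp (-lam * c i j) * αt j))
          - (π i j - α i * Real.exp (-lam * c i j) * αt j)) := by
  have hlogq : ∀ i j, Real.log (α i * Real.exp (-lam * c i j) * αt j)
      = Real.log (α i) + (-lam * c i j) + Real.log (αt j) := by
    intro i j
    rw [Real.log_mul (mul_pos (hα i) (Real.exp_pos _)).ne' (hαt j).ne',
      Real.log_mul (hα i).ne' (Real.exp_pos _).ne', Real.log_exp]
  have expand : ∀ i j, π i j * (Real.log (π i j) - Real.log (α i * Real.exp (-lam * c i j) * αt j))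
          - (π i j - α i * Real.exp (-lam * c i j) * αt j)
      = (π i j * (lam * c i j) + π i j * Real.log (π i j)) - π i j * Real.log (α i)
        - π i j * Real.log (αt j) - π i j + α i * Real.exp (-lam * c i j) * αt j := by
    intro i j; rw [hlogq]; ring
  have hsum : ∑ i, ∑ j, π i j = 1 := by simp only [hrow]; exact hp1
  have hrowa : ∑ i, ∑ j, π i j * Real.log (α i) = ∑ i, p i * Real.log (α i) := by
    refine Finset.sum_congr rfl fun i _ => ?_
    rw [← Finset.sum_mul, hrow]
  have hcola : ∑ i, ∑ j, π i j * Real.log (αt j) = ∑ j, pt j * Real.log (αt j) := by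
    rw [Finset.sum_comm]
    refine Finset.sum_congr rfl fun j _ => ?_
    rw [← Finset.sum_mul, hcol]
  have hlc : ∑ i, ∑ j, π i j * (lam * c i j) = lam * ∑ i, ∑ j, π i j * c i j := by
    rw [Finset.mul_sum]
    refine Finset.sum_congr rfl fun i _ => ?_
    rw [Finset.mul_sum]
    exact Finset.sum_congr rfl fun j _ => by ring
  have h1 : lam * Fobj lam c π
      = lam * (∑ i, ∑ j, π i j * c i j) + (∑ i, ∑ j, π i j * Real.log (π i j)) := by
    have : Fobj lam c π = (∑ i, ∑ j, π i j * c i j)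
        + (1 / lam) * (∑ i, ∑ j, π i j * Real.log (π i j)) := by
      unfold Fobj entM; ring
    rw [this]; field_simp
  have h2 : lam * dual lam c p pt α αt
      = 1 + (∑ i, p i * Real.log (α i)) + (∑ j, pt j * Real.log (αt j))
        - ∑ i, ∑ j, α i * Real.exp (-lam * c i j) * αt j := by
    unfold dual; field_simp
  rw [h1, h2]
  simp only [expand, Finset.sum_sub_distrib, Finset.sum_add_distrib]
  rw [hlc, hrowa, hcola, hsum]
  ring

lemma weak_duality {n m : ℕ} (p : Fin n → ℝ) (pt : Fin m → ℝ) (π : Fin n → Fin m → ℝ)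
    (hπ : IsCoupling p pt π) (hp1 : ∑ i, p i = 1)
    (c : Fin n → Fin m → ℝ) (lam : ℝ) (hlam : 0 < lam)
    (α : Fin n → ℝ) (αt : Fin m → ℝ) (hα : ∀ i, 0 < α i) (hαt : ∀ j, 0 < αt j) :
    dual lam c p pt α αt ≤ Fobj lam c π := by
  obtain ⟨hnn, hrow, hcol⟩ := hπ
  have key := sinkhorn_key p pt π hrow hcol hp1 c lam hlam.ne' α αt hα hαt
  have hT : 0 ≤ ∑ i, ∑ j, (π i j * (Real.log (π i j)
      - Real.log (α i * Real.exp (-lam * c i j) * αt j))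
      - (π i j - α i * Real.exp (-lam * c i j) * αt j)) := by
    refine Finset.sum_nonneg fun i _ => Finset.sum_nonneg fun j _ => ?_
    have := gibbs (hnn i j) (mul_pos (mul_pos (hα i) (Real.exp_pos (-lam * c i j))) (hαt j))
    linarith
  nlinarith [key]

lemma exact_duality {n m : ℕ} (p : Fin n → ℝ) (pt : Fin m → ℝ) (π : Fin n → Fin m → ℝ)
    (hrow : ∀ i, ∑ j, π i j = p i) (hcol : ∀ j, ∑ i, π i j = pt j) (hp1 : ∑ i, p i = 1)
    (c : Fin n → Fin m → ℝ) (lam : ℝ) (hlam : 0 < lam)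
    (α : Fin n → ℝ) (αt : Fin m → ℝ) (hα : ∀ i, 0 < α i) (hαt : ∀ j, 0 < αt j)
    (heq : ∀ i j, π i j = α i * Real.exp (-lam * c i j) * αt j) :
    dual lam c p pt α αt = Fobj lam c π := by
  have key := sinkhorn_key p pt π hrow hcol hp1 c lam hlam.ne' α αt hα hαt
  have hz : ∑ i, ∑ j, (π i j * (Real.log (π i j)
      - Real.log (α i * Real.exp (-lam * c i j) * αt j))
      - (π i j - α i * Real.exp (-lam * c i j) * αt j)) = 0 := by
    refine Finset.sum_eq_zero fun i _ => Finset.sum_eq_zero fun j _ => ?_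
    rw [← heq i j]; ring
  rw [hz] at key
  have : lam * Fobj lam c π = lam * dual lam c p pt α αt := by linarith
  exact (mul_left_cancel₀ hlam.ne' this).symm

lemma continuous_Fobj {n m : ℕ} (lam : ℝ) (c : Fin n → Fin m → ℝ) :
    Continuous fun π : Fin n → Fin m → ℝ => Fobj lam c π := by
  unfold Fobj entM
  apply Continuous.sub
  · exact continuous_finset_sum _ fun i _ => continuous_finset_sum _ fun j _ =>
      (continuous_apply_apply i j).mul continuous_const
  · exact continuous_const.mul (Continuous.neg
      (continuous_finset_sum _ fun i _ => continuous_finset_sum _ fun j _ =>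
        Real.continuous_mul_log.comp ((continuous_apply j).comp (continuous_apply i))))

lemma exists_min_coupling {n m : ℕ} (p : Fin n → ℝ) (pt : Fin m → ℝ)
    (hp0 : ∀ i, 0 < p i) (hpt0 : ∀ j, 0 < pt j)
    (hp1 : ∑ i, p i = 1) (hpt1 : ∑ j, pt j = 1)
    (lam : ℝ) (c : Fin n → Fin m → ℝ) :
    ∃ π0 : Fin n → Fin m → ℝ, IsCoupling p pt π0 ∧
      ∀ π, IsCoupling p pt π → Fobj lam c π0 ≤ Fobj lam c π := by
  set K : Set (Fin n → Fin m → ℝ) := {π | IsCoupling p pt π} with hKdef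
  have hne : K.Nonempty := by
    refine ⟨fun i j => p i * pt j, fun i j => (mul_pos (hp0 i) (hpt0 j)).le, fun i => ?_, fun j => ?_⟩
    · rw [← Finset.mul_sum, hpt1, mul_one]
    · rw [← Finset.sum_mul, hp1, one_mul]
  have hclosed : IsClosed K := by
    have h1 : IsClosed {π : Fin n → Fin m → ℝ | ∀ i j, 0 ≤ π i j} := by
      have : {π : Fin n → Fin m → ℝ | ∀ i j, 0 ≤ π i j}
          = ⋂ i, ⋂ j, {π : Fin n → Fin m → ℝ | 0 ≤ π i j} := by
        ext π; simp
      rw [this]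
      exact isClosed_iInter fun i => isClosed_iInter fun j =>
        isClosed_le continuous_const ((continuous_apply j).comp (continuous_apply i))
    have h2 : IsClosed {π : Fin n → Fin m → ℝ | ∀ i, ∑ j, π i j = p i} := by
      have : {π : Fin n → Fin m → ℝ | ∀ i, ∑ j, π i j = p i}
          = ⋂ i, {π : Fin n → Fin m → ℝ | ∑ j, π i j = p i} := by ext π; simp
      rw [this]
      exact isClosed_iInter fun i => isClosed_eq
        (continuous_finset_sum _ fun j _ => (continuous_apply j).comp (continuous_apply i))
        continuous_const
    have h3 : IsClosed {π : Fin n → Fin m → ℝ | ∀ j, ∑ i, π i j = pt j} := by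
      have : {π : Fin n → Fin m → ℝ | ∀ j, ∑ i, π i j = pt j}
          = ⋂ j, {π : Fin n → Fin m → ℝ | ∑ i, π i j = pt j} := by ext π; simp
      rw [this]
      exact isClosed_iInter fun j => isClosed_eq
        (continuous_finset_sum _ fun i _ => (continuous_apply j).comp (continuous_apply i))
        continuous_const
    have : K = {π : Fin n → Fin m → ℝ | ∀ i j, 0 ≤ π i j}
        ∩ ({π | ∀ i, ∑ j, π i j = p i} ∩ {π | ∀ j, ∑ i, π i j = pt j}) := by
      ext π; simp [hKdef, IsCoupling, Set.mem_setOf_eq, and_assoc]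
    rw [this]
    exact h1.inter (h2.inter h3)
  have hcompact : IsCompact K := by
    refine IsCompact.of_isClosed_subset
      (isCompact_univ_pi fun i => isCompact_univ_pi fun j => isCompact_Icc (a := (0:ℝ)) (b := 1))
      hclosed ?_
    intro π hπ
    obtain ⟨hnn, hrow, _⟩ := hπ
    rw [Set.mem_univ_pi]
    intro i
    rw [Set.mem_univ_pi]
    intro j
    rw [Set.mem_Icc]
    refine ⟨hnn i j, ?_⟩
    calc π i j ≤ ∑ j', π i j' := Finset.single_le_sum (fun j' _ => hnn i j') (Finset.mem_univ j)
      _ = p i := hrow i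
      _ ≤ ∑ i', p i' := Finset.single_le_sum (fun i' _ => (hp0 i').le) (Finset.mem_univ i)
      _ = 1 := hp1
  obtain ⟨π0, hπ0, hmin⟩ := hcompact.exists_isMinOn hne (continuous_Fobj lam c).continuousOn
  exact ⟨π0, hπ0, fun π hπ => hmin hπ⟩

lemma fobj_eq {n m : ℕ} (lam : ℝ) (c : Fin n → Fin m → ℝ) (π : Fin n → Fin m → ℝ) :
    Fobj lam c π = ∑ i, ∑ j, (π i j * c i j + (1 / lam) * (π i j * Real.log (π i j))) := by
  have : ∑ i, ∑ j, (π i j * c i j + (1 / lam) * (π i j * Real.log (π i j)))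
      = (∑ i, ∑ j, π i j * c i j) + (1 / lam) * ∑ i, ∑ j, π i j * Real.log (π i j) := by
    simp [Finset.sum_add_distrib, Finset.mul_sum]
  rw [this]
  unfold Fobj entM
  ring

lemma hasDerivAt_entry (a e C k : ℝ) (ha : a ≠ 0) :
    HasDerivAt (fun t : ℝ => (a + t * e) * C + k * ((a + t * e) * Real.log (a + t * e)))
      (e * C + k * (e * (Real.log a + 1))) 0 := by
  have h1 : HasDerivAt (fun t : ℝ => a + t * e) e 0 := by
    simpa using ((hasDerivAt_id (0 : ℝ)).mul_const e).const_add a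
  have h2 : HasDerivAt (fun x : ℝ => x * Real.log x) (Real.log a + 1) a :=
    Real.hasDerivAt_mul_log ha
  have h2' : HasDerivAt (fun x : ℝ => x * Real.log x) (Real.log a + 1) (a + 0 * e) := by
    simpa using h2
  have h3 : HasDerivAt (fun t : ℝ => (a + t * e) * Real.log (a + t * e))
      ((Real.log a + 1) * e) 0 := by have := h2'.comp 0 h1; exact this
  have h4 := (h1.mul_const C).add (h3.const_mul k)
  exact h4.congr_deriv (by ring)

lemma min_coupling_pos {n m : ℕ} (p : Fin n → ℝ) (pt : Fin m → ℝ)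
    (hp0 : ∀ i, 0 < p i) (hpt0 : ∀ j, 0 < pt j)
    (hp1 : ∑ i, p i = 1) (hpt1 : ∑ j, pt j = 1)
    (c : Fin n → Fin m → ℝ) (lam : ℝ) (hlam : 0 < lam)
    (π0 : Fin n → Fin m → ℝ) (hπ0 : IsCoupling p pt π0)
    (hmin : ∀ π, IsCoupling p pt π → Fobj lam c π0 ≤ Fobj lam c π) :
    ∀ i j, 0 < π0 i j := by
  by_contra hcon
  push_neg at hcon
  obtain ⟨i₀, j₀, hzle⟩ := hcon
  obtain ⟨hnn, hrow, hcol⟩ := hπ0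
  have hz0 : π0 i₀ j₀ = 0 := le_antisymm hzle (hnn _ _)
  set e : Fin n → Fin m → ℝ := fun i j => p i * pt j - π0 i j with he
  set q : ℝ → Fin n → Fin m → ℝ := fun t i j => π0 i j + t * e i j with hq
  have hqc : ∀ t ∈ Set.Icc (0:ℝ) 1, IsCoupling p pt (q t) := by
    intro t ⟨ht0, ht1⟩
    refine ⟨fun i j => ?_, fun i => ?_, fun j => ?_⟩
    · have h1 : q t i j = (1 - t) * π0 i j + t * (p i * pt j) := by
        simp only [hq, he]; ring
      rw [h1]
      have := mul_pos (hp0 i) (hpt0 j)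
      have := hnn i j
      nlinarith
    · have h1 : ∑ j, q t i j = (∑ j, π0 i j) + t * ((∑ j, p i * pt j) - ∑ j, π0 i j) := by
        simp only [hq, he, Finset.sum_add_distrib, Finset.mul_sum, mul_sub]
        rw [Finset.sum_sub_distrib]
      rw [h1, hrow i, ← Finset.mul_sum, hpt1]
      ring
    · have h1 : ∑ i, q t i j = (∑ i, π0 i j) + t * ((∑ i, p i * pt j) - ∑ i, π0 i j) := by
        simp only [hq, he, Finset.sum_add_distrib, Finset.mul_sum, mul_sub]
        rw [Finset.sum_sub_distrib]
      rw [h1, hcol j, ← Finset.sum_mul, hp1]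
      ring
  -- per-entry slope functions
  set T : Fin n × Fin m → ℝ → ℝ := fun z t =>
    ((π0 z.1 z.2 + t * e z.1 z.2) * c z.1 z.2
        + (1/lam) * ((π0 z.1 z.2 + t * e z.1 z.2) * Real.log (π0 z.1 z.2 + t * e z.1 z.2))
      - (π0 z.1 z.2 * c z.1 z.2 + (1/lam) * (π0 z.1 z.2 * Real.log (π0 z.1 z.2)))) / t
    with hT
  have h1 : ∀ (f : Fin n → Fin m → ℝ), ∑ z : Fin n × Fin m, f z.1 z.2 = ∑ i, ∑ j, f i j :=
    fun f => by rw [Fintype.sum_prod_type]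
  have hΔ : ∀ t : ℝ, (Fobj lam c (q t) - Fobj lam c π0) / t = ∑ z : Fin n × Fin m, T z t := by
    intro t
    rw [fobj_eq lam c (q t), fobj_eq lam c π0, ← h1 _, ← h1 _, ← Finset.sum_sub_distrib,
      Finset.sum_div]
  set Z : Finset (Fin n × Fin m) := Finset.univ.filter (fun z => π0 z.1 z.2 = 0) with hZ
  have hsplit : ∀ t : ℝ, ∑ z : Fin n × Fin m, T z t
      = (∑ z ∈ Z, T z t) + ∑ z ∈ Finset.univ.filter (fun z => ¬ π0 z.1 z.2 = 0), T z t :=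
    fun t => (Finset.sum_filter_add_sum_filter_not _ _ _).symm
  -- limit of the positive part
  have hP : ∀ z ∈ Finset.univ.filter (fun z : Fin n × Fin m => ¬ π0 z.1 z.2 = 0),
      Filter.Tendsto (T z) (nhdsWithin 0 (Set.Ioi 0))
        (nhds (e z.1 z.2 * c z.1 z.2 + (1/lam) * (e z.1 z.2 * (Real.log (π0 z.1 z.2) + 1)))) := by
    intro z hzmem
    rw [Finset.mem_filter] at hzmem
    have hd := hasDerivAt_entry (π0 z.1 z.2) (e z.1 z.2) (c z.1 z.2) (1/lam) hzmem.2
    have := hasDerivAt_iff_tendsto_slope.mp hd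
    have h2 := this.mono_left (nhdsWithin_mono 0 (fun x hx => ne_of_gt hx))
    refine h2.congr fun t => ?_
    simp only [slope_def_field, hT, sub_zero, zero_mul, add_zero]
  have hPsum : Filter.Tendsto
      (fun t => ∑ z ∈ Finset.univ.filter (fun z : Fin n × Fin m => ¬ π0 z.1 z.2 = 0), T z t)
      (nhdsWithin 0 (Set.Ioi 0))
      (nhds (∑ z ∈ Finset.univ.filter (fun z : Fin n × Fin m => ¬ π0 z.1 z.2 = 0),
        (e z.1 z.2 * c z.1 z.2 + (1/lam) * (e z.1 z.2 * (Real.log (π0 z.1 z.2) + 1))))) :=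
    tendsto_finset_sum _ hP
  -- the zero part
  have hZpos : ∀ z ∈ Z, 0 < e z.1 z.2 := by
    intro z hzmem
    rw [hZ, Finset.mem_filter] at hzmem
    have : e z.1 z.2 = p z.1 * pt z.2 := by rw [he]; simp [hzmem.2]
    rw [this]
    exact mul_pos (hp0 _) (hpt0 _)
  set CZ : ℝ := ∑ z ∈ Z, (e z.1 z.2 * c z.1 z.2 + (1/lam) * (e z.1 z.2 * Real.log (e z.1 z.2)))
    with hCZ
  set BZ : ℝ := ∑ z ∈ Z, (1/lam) * e z.1 z.2 with hBZ
  have hBZpos : 0 < BZ := by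
    refine Finset.sum_pos (fun z hzmem => mul_pos (by positivity) (hZpos z hzmem)) ?_
    exact ⟨(i₀, j₀), by simp [hZ, hz0]⟩
  have hZeq : ∀ t ∈ Set.Ioi (0:ℝ), (∑ z ∈ Z, T z t) = CZ + BZ * Real.log t := by
    intro t ht
    rw [Set.mem_Ioi] at ht
    rw [hCZ, hBZ, Finset.sum_mul, ← Finset.sum_add_distrib]
    refine Finset.sum_congr rfl fun z hzmem => ?_
    rw [hZ, Finset.mem_filter] at hzmem
    have hez := hZpos z (by rw [hZ]; exact Finset.mem_filter.mpr ⟨Finset.mem_univ _, hzmem.2⟩)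
    simp only [hT, hzmem.2, zero_add, zero_mul, Real.log_zero, mul_zero, add_zero, sub_zero]
    rw [Real.log_mul ht.ne' hez.ne']
    field_simp
    ring
  have hZbot : Filter.Tendsto (fun t => ∑ z ∈ Z, T z t) (nhdsWithin 0 (Set.Ioi 0))
      Filter.atBot := by
    have h1 : Filter.Tendsto (fun t => CZ + BZ * Real.log t) (nhdsWithin 0 (Set.Ioi 0))
        Filter.atBot := by
      apply Filter.tendsto_atBot_add_const_left
      exact Filter.Tendsto.const_mul_atBot hBZpos Real.tendsto_log_nhdsGT_zero
    refine Filter.Tendsto.congr' ?_ h1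
    filter_upwards [self_mem_nhdsWithin] with t ht
    exact (hZeq t ht).symm
  -- total limit
  have htot : Filter.Tendsto (fun t => (Fobj lam c (q t) - Fobj lam c π0) / t)
      (nhdsWithin 0 (Set.Ioi 0)) Filter.atBot :=
    (hZbot.atBot_add hPsum).congr fun t => ((hΔ t).trans (hsplit t)).symm
  have hev1 : ∀ᶠ t in nhdsWithin 0 (Set.Ioi 0), (Fobj lam c (q t) - Fobj lam c π0) / t < 0 :=
    htot.eventually (Filter.eventually_lt_atBot 0)
  have hev2 : ∀ᶠ t in nhdsWithin 0 (Set.Ioi 0), t ∈ Set.Ioo (0:ℝ) 1 :=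
    Filter.eventually_of_mem (Ioo_mem_nhdsGT_of_mem ⟨le_refl 0, zero_lt_one⟩) (fun _ h => h)
  obtain ⟨t, ht1, ht2⟩ := (hev1.and hev2).exists
  have hlt : Fobj lam c (q t) < Fobj lam c π0 := by
    rcases div_neg_iff.mp ht1 with ⟨h, h'⟩ | ⟨h, h'⟩
    · linarith [ht2.1]
    · linarith
  have := hmin (q t) (hqc t ⟨ht2.1.le, ht2.2.le⟩)
  linarith

lemma exists_potentials {n m : ℕ} (hn : 1 ≤ n) (hm : 1 ≤ m)
    (p : Fin n → ℝ) (pt : Fin m → ℝ)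
    (c : Fin n → Fin m → ℝ) (lam : ℝ) (hlam : 0 < lam)
    (π0 : Fin n → Fin m → ℝ) (hπ0 : IsCoupling p pt π0) (hpos : ∀ i j, 0 < π0 i j)
    (hmin : ∀ π, IsCoupling p pt π → Fobj lam c π0 ≤ Fobj lam c π) :
    ∃ (α : Fin n → ℝ) (αt : Fin m → ℝ), (∀ i, 0 < α i) ∧ (∀ j, 0 < αt j) ∧
      ∀ i j, π0 i j = α i * Real.exp (-lam * c i j) * αt j := by
  obtain ⟨hnn, hrow, hcol⟩ := hπ0
  set i₀ : Fin n := ⟨0, hn⟩ with hi₀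
  set j₀ : Fin m := ⟨0, hm⟩ with hj₀
  set ψ : Fin n → Fin m → ℝ := fun i j => c i j + (1/lam) * (Real.log (π0 i j) + 1) with hψdef
  -- minimum entry
  obtain ⟨ε, hε, hεle⟩ : ∃ ε > 0, ∀ i' j', ε ≤ π0 i' j' := by
    obtain ⟨z, _, hzmin⟩ := Finset.exists_min_image Finset.univ
      (fun z : Fin n × Fin m => π0 z.1 z.2) ⟨(i₀, j₀), Finset.mem_univ _⟩
    exact ⟨π0 z.1 z.2, hpos _ _, fun i' j' => hzmin (i', j') (Finset.mem_univ _)⟩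
  have hψ : ∀ i j, ψ i j + ψ i₀ j₀ = ψ i j₀ + ψ i₀ j := by
    intro i j
    set di : Fin n → ℝ := fun i' => (if i' = i then (1:ℝ) else 0) - (if i' = i₀ then 1 else 0)
      with hdi
    set dj : Fin m → ℝ := fun j' => (if j' = j then (1:ℝ) else 0) - (if j' = j₀ then 1 else 0)
      with hdj
    have hdiabs : ∀ i', |di i'| ≤ 1 := by
      intro i'; simp only [hdi]; split_ifs <;> norm_num
    have hdjabs : ∀ j', |dj j'| ≤ 1 := by
      intro j'; simp only [hdj]; split_ifs <;> norm_num
    have hdisum : ∑ i', di i' = 0 := by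
      simp [hdi, Finset.sum_sub_distrib]
    have hdjsum : ∑ j', dj j' = 0 := by
      simp [hdj, Finset.sum_sub_distrib]
    set g : ℝ → ℝ := fun t => ∑ i', ∑ j',
      ((π0 i' j' + t * (di i' * dj j')) * c i' j'
        + (1/lam) * ((π0 i' j' + t * (di i' * dj j'))
            * Real.log (π0 i' j' + t * (di i' * dj j')))) with hgdef
    have hg : HasDerivAt g (∑ i', ∑ j', (di i' * dj j') * ψ i' j') 0 := by
      refine HasDerivAt.fun_sum fun i' _ => HasDerivAt.fun_sum fun j' _ => ?_
      have := hasDerivAt_entry (π0 i' j') (di i' * dj j') (c i' j') (1/lam) (hpos i' j').ne'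
      exact this.congr_deriv (by simp only [hψdef]; ring)
    have hgF : ∀ t, g t = Fobj lam c (fun i' j' => π0 i' j' + t * (di i' * dj j')) :=
      fun t => (fobj_eq lam c _).symm
    have hg0 : g 0 = Fobj lam c π0 := by
      rw [hgF 0]
      congr 1
      funext i' j'
      ring
    have hloc : IsLocalMin g 0 := by
      filter_upwards [Ioo_mem_nhds (by linarith : -ε < (0:ℝ)) hε] with t ht
      have htabs : |t| < ε := abs_lt.mpr ⟨ht.1, ht.2⟩
      have hcoup : IsCoupling p pt (fun i' j' => π0 i' j' + t * (di i' * dj j')) := by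
        refine ⟨fun i' j' => ?_, fun i' => ?_, fun j' => ?_⟩
        · have habs : |t * (di i' * dj j')| ≤ |t| := by
            rw [abs_mul]
            refine mul_le_of_le_one_right (abs_nonneg _) ?_
            rw [abs_mul]
            exact mul_le_one₀ (hdiabs i') (abs_nonneg _) (hdjabs j')
          have := neg_abs_le (t * (di i' * dj j'))
          have := hεle i' j'
          show 0 ≤ π0 i' j' + t * (di i' * dj j')
          linarith
        · rw [Finset.sum_add_distrib, hrow]
          have : ∑ j', t * (di i' * dj j') = t * di i' * ∑ j', dj j' := by
            rw [Finset.mul_sum]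
            exact Finset.sum_congr rfl fun j' _ => by ring
          rw [this, hdjsum, mul_zero, add_zero]
        · rw [Finset.sum_add_distrib, hcol]
          have : ∑ i', t * (di i' * dj j') = t * dj j' * ∑ i', di i' := by
            rw [Finset.mul_sum]
            exact Finset.sum_congr rfl fun i' _ => by ring
          rw [this, hdisum, mul_zero, add_zero]
      rw [hg0, hgF t]
      exact hmin _ hcoup
    have hD0 : ∑ i', ∑ j', (di i' * dj j') * ψ i' j' = 0 :=
      hloc.hasDerivAt_eq_zero hg
    have hinner : ∀ i', ∑ j', (di i' * dj j') * ψ i' j' = di i' * (ψ i' j - ψ i' j₀) := by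
      intro i'
      have : ∀ j', (di i' * dj j') * ψ i' j' = di i' * (dj j' * ψ i' j') := fun j' => by ring
      simp only [this]
      rw [← Finset.mul_sum]
      congr 1
      simp [hdj, sub_mul, Finset.sum_sub_distrib]
    have houter : ∑ i', di i' * (ψ i' j - ψ i' j₀)
        = (ψ i j - ψ i j₀) - (ψ i₀ j - ψ i₀ j₀) := by
      simp [hdi, sub_mul, Finset.sum_sub_distrib]
    rw [Finset.sum_congr rfl (fun i' _ => hinner i'), houter] at hD0
    linarith
  have hlog : ∀ i j, Real.log (π0 i j) = lam * ψ i j - lam * c i j - 1 := by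
    intro i j
    simp only [hψdef]
    field_simp
    ring
  refine ⟨fun i => Real.exp (lam * ψ i j₀ - lam * ψ i₀ j₀),
    fun j => Real.exp (lam * ψ i₀ j - 1),
    fun i => Real.exp_pos _, fun j => Real.exp_pos _, fun i j => ?_⟩
  rw [← Real.exp_log (hpos i j), ← Real.exp_add, ← Real.exp_add]
  congr 1
  have h1 := hψ i j
  have h2 := hlog i j
  have : lam * ψ i j = lam * ψ i j₀ + lam * ψ i₀ j - lam * ψ i₀ j₀ := by nlinarith [h1]
  linarith


/-- Strong duality for the Sinkhorn problem (Proposition 3.5): the supremum of the dual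
over strictly positive vectors equals the minimum of the primal over strictly positive
couplings, and both are attained. -/
theorem sinkhorn_strong_duality {n m : ℕ} (hn : 1 ≤ n) (hm : 1 ≤ m)
    (p : Fin n → ℝ) (pt : Fin m → ℝ)
    (hp0 : ∀ i, 0 < p i) (hpt0 : ∀ j, 0 < pt j)
    (hp1 : ∑ i, p i = 1) (hpt1 : ∑ j, pt j = 1)
    (c : Fin n → Fin m → ℝ) (hc : ∀ i j, 0 ≤ c i j)
    (lam : ℝ) (hlam : 0 < lam) :
    ∃ v : ℝ,
      IsGreatest {x : ℝ | ∃ (α : Fin n → ℝ) (αt : Fin m → ℝ),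
        (∀ i, 0 < α i) ∧ (∀ j, 0 < αt j) ∧ x = dual lam c p pt α αt} v ∧
      IsLeast {x : ℝ | ∃ π : Fin n → Fin m → ℝ,
        IsCoupling p pt π ∧ (∀ i j, 0 < π i j) ∧ x = Fobj lam c π} v := by
  obtain ⟨π0, hπ0, hmin⟩ := exists_min_coupling p pt hp0 hpt0 hp1 hpt1 lam c
  have hpos := min_coupling_pos p pt hp0 hpt0 hp1 hpt1 c lam hlam π0 hπ0 hmin
  obtain ⟨α, αt, hα, hαt, heq⟩ := exists_potentials hn hm p pt c lam hlam π0 hπ0 hpos hmin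
  refine ⟨Fobj lam c π0, ⟨⟨α, αt, hα, hαt, ?_⟩, ?_⟩, ⟨π0, hπ0, hpos, rfl⟩, ?_⟩
  · exact (exact_duality p pt π0 hπ0.2.1 hπ0.2.2 hp1 c lam hlam α αt hα hαt heq).symm
  · rintro x ⟨α', αt', hα', hαt', rfl⟩
    exact weak_duality p pt π0 hπ0 hp1 c lam hlam α' αt' hα' hαt'
  · rintro x ⟨π, hπ, hπpos, rfl⟩
    exact hmin π hπ
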